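/- Let P ∈ ℝ^{U×L} and let s, ŝ ∈ ℝ^{U}. If S := Pᵀdiag(s)P is positive definite and Pᵀdiag(ŝ)P is positive semidefinite, then ⟨diag(P S⁻¹ Pᵀ), ŝ⟩ ≥ 0, where diag(P S⁻¹ Pᵀ) ∈ ℝ^{U} denotes the vector of diagonal entries of P S⁻¹ Pᵀ and ⟨·,·⟩ the standard inner product on ℝ^{U}. -/

import Mathlib

open Matrix

lemma psd_trace_nonneg {n : ℕ} {M : Matrix (Fin n) (Fin n) ℝ}
    (hM : M.PosSemidef) : 0 ≤ M.trace := by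
  rw [Matrix.trace]
  apply Finset.sum_nonneg
  intro i _
  exact hM.diag_nonneg

open scoped MatrixOrder

lemma psd_trace_mul_nonneg {n : ℕ} {A B : Matrix (Fin n) (Fin n) ℝ}
    (hA : A.PosSemidef) (hB : B.PosSemidef) : 0 ≤ (A * B).trace := by
  have h1 : A * B = CFC.sqrt A * (CFC.sqrt A * B) := by
    rw [← mul_assoc, CFC.sqrt_mul_sqrt_self A hA.nonneg]
  rw [h1, Matrix.trace_mul_comm, mul_assoc]
  have h2 : (CFC.sqrt A * B * CFC.sqrt A).PosSemidef := by
    have h3 := hB.mul_mul_conjTranspose_same (CFC.sqrt A)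
    rwa [show (CFC.sqrt A)ᴴ = CFC.sqrt A from (CFC.sqrt_nonneg A).posSemidef.1] at h3
  rw [← mul_assoc]
  exact psd_trace_nonneg h2

theorem stmt_8 {U L : ℕ} (P : Matrix (Fin U) (Fin L) ℝ) (s shat : Fin U → ℝ)
    (hS : (Pᵀ * Matrix.diagonal s * P).PosDef)
    (hShat : (Pᵀ * Matrix.diagonal shat * P).PosSemidef) :
    0 ≤ Matrix.diag (P * (Pᵀ * Matrix.diagonal s * P)⁻¹ * Pᵀ) ⬝ᵥ shat := by
  set S := Pᵀ * Matrix.diagonal s * P with hSdef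
  have hkey : Matrix.diag (P * S⁻¹ * Pᵀ) ⬝ᵥ shat
      = ((Pᵀ * Matrix.diagonal shat * P) * S⁻¹).trace := by
    rw [Matrix.trace_mul_comm]
    simp [Matrix.trace, Matrix.diag, dotProduct, Matrix.mul_apply, Finset.mul_sum,
      Finset.sum_mul, Matrix.diagonal, mul_assoc, mul_comm, mul_left_comm]
    rw [Finset.sum_comm]
    apply Finset.sum_congr rfl
    intro i _
    rw [Finset.sum_comm]
    apply Finset.sum_congr rfl
    intro j _
    apply Finset.sum_congr rfl
    intro k _
    have hsym : S⁻¹ j i = S⁻¹ i j := by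
      have h := hS.posSemidef.inv.1
      calc S⁻¹ j i = S⁻¹ᴴ i j := by simp [Matrix.conjTranspose_apply]
        _ = S⁻¹ i j := by rw [h]
    rw [hsym]
  rw [hkey]
  exact psd_trace_mul_nonneg hShat hS.posSemidef.inv
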